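/- There do not exist a positive-edge-weighted tree T with four distinguished leaves a, b, c, d and reals 0 ≤ d_min ≤ d_max such that: d_min ≤ d_T(a,b) ≤ d_max, d_min ≤ d_T(b,c) ≤ d_max, d_min ≤ d_T(c,d) ≤ d_max, d_T(a,d) < d_min, d_T(a,c) > d_max, and d_T(b,d) > d_max. (Forbidden coloring f-c(P_4): the path a-b-c-d with non-edge (a,d) red and non-edges (a,c), (b,d) blue is not realizable.) -/

import Mathlib

open SimpleGraph

/-- A tree with positive real edge weights. -/
structure WTree (α : Type) where
  g : SimpleGraph α
  isTree : g.IsTree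
  w : α → α → ℝ
  w_symm : ∀ a b, w a b = w b a
  w_pos : ∀ a b, g.Adj a b → 0 < w a b

/-- The weighted distance between two vertices of a weighted tree: the sum of
the weights of the edges on the unique path between them. -/
noncomputable def WTree.dist {α : Type} (T : WTree α) (u v : α) : ℝ :=
  (((T.isTree.existsUnique_path u v).exists.choose).darts.map
    (fun d => T.w d.toProd.1 d.toProd.2)).sum

/-- A vertex of a weighted tree is a leaf if it has exactly one neighbor. -/
def WTree.IsLeaf {α : Type} (T : WTree α) (v : α) : Prop :=
  ∃! u, T.g.Adj v u

/-- `G = PCG(T, dmin, dmax)` via the leaf-assignment `f`. -/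
def IsPCGWith {V β : Type} (G : SimpleGraph V) (T : WTree β) (f : V → β)
    (dmin dmax : ℝ) : Prop :=
  Function.Injective f ∧ (∀ v, T.IsLeaf (f v)) ∧ (∀ b, T.IsLeaf b → ∃ v, f v = b) ∧
    ∀ u v : V, u ≠ v →
      (G.Adj u v ↔ dmin ≤ T.dist (f u) (f v) ∧ T.dist (f u) (f v) ≤ dmax)

/-- A graph is a pairwise compatibility graph. -/
def IsPCG {V : Type} (G : SimpleGraph V) : Prop :=
  ∃ (β : Type) (T : WTree β) (f : V → β) (dmin dmax : ℝ),
    0 ≤ dmin ∧ dmin ≤ dmax ∧ IsPCGWith G T f dmin dmax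

namespace WTree

variable {α : Type} (T : WTree α)

/-- The weighted length of a walk. -/
noncomputable def wlen {u v : α} (p : T.g.Walk u v) : ℝ :=
  (p.darts.map (fun d => T.w d.toProd.1 d.toProd.2)).sum

lemma wlen_append {u v x : α} (p : T.g.Walk u v) (q : T.g.Walk v x) :
    T.wlen (p.append q) = T.wlen p + T.wlen q := by
  simp [wlen, Walk.darts_append]

lemma wlen_reverse {u v : α} (p : T.g.Walk u v) : T.wlen p.reverse = T.wlen p := by
  simp only [wlen, Walk.darts_reverse, List.map_reverse, List.sum_reverse, List.map_map]
  congr 1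
  refine List.map_congr_left ?_
  intro d _
  simp only [Function.comp_apply, Dart.symm, Prod.fst_swap, Prod.snd_swap]
  exact T.w_symm d.toProd.2 d.toProd.1

lemma wlen_nonneg {u v : α} (p : T.g.Walk u v) : 0 ≤ T.wlen p := by
  apply List.sum_nonneg
  intro x hx
  obtain ⟨d, _, rfl⟩ := List.mem_map.1 hx
  exact (T.w_pos _ _ d.adj).le

/-- The canonical path from `u` to `v`. -/
noncomputable def cp (u v : α) : T.g.Walk u v :=
  (T.isTree.existsUnique_path u v).exists.choose

lemma cp_isPath (u v : α) : (T.cp u v).IsPath :=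
  (T.isTree.existsUnique_path u v).exists.choose_spec

lemma dist_eq {u v : α} {p : T.g.Walk u v} (hp : p.IsPath) : T.dist u v = T.wlen p := by
  have h : T.cp u v = p := (T.isTree.existsUnique_path u v).unique (T.cp_isPath u v) hp
  show T.wlen (T.cp u v) = T.wlen p
  rw [h]

lemma dist_nonneg (u v : α) : 0 ≤ T.dist u v := by
  rw [T.dist_eq (T.cp_isPath u v)]; exact T.wlen_nonneg _

lemma dist_comm (u v : α) : T.dist u v = T.dist v u := by
  rw [T.dist_eq ((T.cp_isPath v u).reverse), wlen_reverse, ← T.dist_eq (T.cp_isPath v u)]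

lemma isPath_append {u v x : α} {p : T.g.Walk u v} {q : T.g.Walk v x}
    (hp : p.IsPath) (hq : q.IsPath) (h : ∀ y, y ∈ p.support → y ∈ q.support → y = v) :
    (p.append q).IsPath := by
  rw [Walk.isPath_def, Walk.support_append, List.nodup_append]
  refine ⟨hp.support_nodup, hq.support_nodup.tail, ?_⟩
  intro y hy z hyt hyz
  subst hyz
  have hyq : y ∈ q.support := List.mem_of_mem_tail hyt
  have : y = v := h y hy hyq
  subst this
  have := hq.support_nodup
  rw [q.support_eq_cons] at this
  exact (List.nodup_cons.1 this).1 hyt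

/-- Splitting the distance at a vertex on a path. -/
lemma dist_split [DecidableEq α] {u v m : α} {p : T.g.Walk u v} (hp : p.IsPath)
    (hm : m ∈ p.support) :
    T.dist u v = T.dist u m + T.dist m v := by
  rw [T.dist_eq hp, T.dist_eq (hp.takeUntil hm), T.dist_eq (hp.dropUntil hm),
    ← T.wlen_append, p.take_spec hm]

/-- First vertex of `p` lying on `q`. -/
lemma exists_first {u v : α} (p : T.g.Walk u v) : ∀ {z : α} (q : T.g.Walk v z),
    ∃ (m : α) (r : T.g.Walk u m) (s : T.g.Walk m v),
      r.append s = p ∧ m ∈ q.support ∧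
      ∀ y ∈ r.support, y ∈ q.support → y = m := by
  induction p with
  | nil =>
    intro z q
    exact ⟨_, Walk.nil, Walk.nil, rfl, q.start_mem_support, by
      intro y hy _; simpa using hy⟩
  | @cons u w v h p ih =>
    intro z q
    by_cases hu : u ∈ q.support
    · refine ⟨u, Walk.nil, Walk.cons h p, rfl, hu, ?_⟩
      intro y hy _; simpa using hy
    · obtain ⟨m, r, s, hrs, hmq, hprop⟩ := ih q
      refine ⟨m, Walk.cons h r, s, by rw [Walk.cons_append, hrs], hmq, ?_⟩
      intro y hy hyq
      rw [Walk.support_cons, List.mem_cons] at hy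
      rcases hy with rfl | hy
      · exact absurd hyq hu
      · exact hprop y hy hyq

/-- The median point of a "tripod". -/
lemma exists_median [DecidableEq α] (x y z : α) : ∃ m,
    T.dist x y = T.dist x m + T.dist m y ∧
    T.dist y z = T.dist y m + T.dist m z ∧
    T.dist x z = T.dist x m + T.dist m z := by
  obtain ⟨m, r, s, hrs, hmq, hprop⟩ := T.exists_first (T.cp x y) (T.cp y z)
  have hp : (r.append s).IsPath := by rw [hrs]; exact T.cp_isPath x y
  have hr : r.IsPath := hp.of_append_left
  have hs : s.IsPath := hp.of_append_right
  have hq : (T.cp y z).IsPath := T.cp_isPath y z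
  refine ⟨m, ?_, T.dist_split hq hmq, ?_⟩
  · rw [T.dist_eq hp, wlen_append, ← T.dist_eq hr, ← T.dist_eq hs]
  · have hdrop := hq.dropUntil hmq
    have hW : (r.append ((T.cp y z).dropUntil m hmq)).IsPath := by
      refine T.isPath_append hr hdrop ?_
      intro y' hy' hy'q
      exact hprop y' hy' (Walk.support_dropUntil_subset _ hmq hy'q)
    rw [T.dist_eq hW, wlen_append, ← T.dist_eq hr, ← T.dist_eq hdrop]

lemma dist_triangle (x y z : α) : T.dist x z ≤ T.dist x y + T.dist y z := by
  classical
  obtain ⟨m, h1, h2, h3⟩ := T.exists_median x y z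
  have h4 := T.dist_comm m y
  have h5 := T.dist_nonneg m y
  linarith

end WTree

theorem forbidden_P4 : ¬ ∃ (β : Type) (T : WTree β) (a b c d : β) (dmin dmax : ℝ),
    T.IsLeaf a ∧ T.IsLeaf b ∧ T.IsLeaf c ∧ T.IsLeaf d ∧
    a ≠ b ∧ a ≠ c ∧ a ≠ d ∧ b ≠ c ∧ b ≠ d ∧ c ≠ d ∧
    0 ≤ dmin ∧ dmin ≤ dmax ∧
    dmin ≤ T.dist a b ∧ T.dist a b ≤ dmax ∧
    dmin ≤ T.dist b c ∧ T.dist b c ≤ dmax ∧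
    dmin ≤ T.dist c d ∧ T.dist c d ≤ dmax ∧
    T.dist a d < dmin ∧
    dmax < T.dist a c ∧ dmax < T.dist b d := by
  rintro ⟨β, T, a, b, c, d, dmin, dmax, -, -, -, -, -, -, -, -, -, -,
    h0, h1, hab1, hab2, hbc1, hbc2, hcd1, hcd2, had, hac, hbd⟩
  classical
  by_cases hA : ∃ x, x ∈ (T.cp a b).support ∧ x ∈ (T.cp c d).support
  · -- paths P(a,b) and P(c,d) meet: four-point gives d(a,c)+d(b,d) ≤ d(a,b)+d(c,d)
    obtain ⟨m, hm1, hm2⟩ := hA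
    have e1 := T.dist_split (T.cp_isPath a b) hm1
    have e2 := T.dist_split (T.cp_isPath c d) hm2
    have t1 := T.dist_triangle a m c
    have t2 := T.dist_triangle b m d
    have c1 := T.dist_comm m b
    have c2 := T.dist_comm m c
    have c3 := T.dist_comm b m
    linarith
  · push_neg at hA
    -- medians m (of b over path a-d) and n (of c over path d-a)
    obtain ⟨m, r, s, hrs, hmq, hmprop⟩ := T.exists_first (T.cp b a) (T.cp a d)
    obtain ⟨n, r', s', hrs', hnq, hnprop⟩ := T.exists_first (T.cp c d) (T.cp d a)
    set p₀ := T.cp a d with hp₀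
    have hp₀path : p₀.IsPath := T.cp_isPath a d
    -- cp d a = p₀.reverse
    have hda : T.cp d a = p₀.reverse :=
      (T.isTree.existsUnique_path d a).unique (T.cp_isPath d a) hp₀path.reverse
    have hda_supp : ∀ x, x ∈ (T.cp d a).support ↔ x ∈ p₀.support := by
      intro x; rw [hda, Walk.support_reverse, List.mem_reverse]
    -- cp b a = (cp a b).reverse
    have hba : T.cp b a = (T.cp a b).reverse :=
      (T.isTree.existsUnique_path b a).unique (T.cp_isPath b a) (T.cp_isPath a b).reverse
    have hr_sub : ∀ x, x ∈ r.support → x ∈ (T.cp a b).support := by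
      intro x hx
      have : x ∈ (r.append s).support := by
        rw [Walk.mem_support_append_iff]; exact Or.inl hx
      rw [hrs, hba, Walk.support_reverse, List.mem_reverse] at this
      exact this
    have hr'_sub : ∀ x, x ∈ r'.support → x ∈ (T.cp c d).support := by
      intro x hx
      have : x ∈ (r'.append s').support := by
        rw [Walk.mem_support_append_iff]; exact Or.inl hx
      rwa [hrs'] at this
    -- paths r, r' etc
    have hrpath : r.IsPath := by
      have : (r.append s).IsPath := by rw [hrs]; exact T.cp_isPath b a
      exact this.of_append_left
    have hr'path : r'.IsPath := by
      have : (r'.append s').IsPath := by rw [hrs']; exact T.cp_isPath c d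
      exact this.of_append_left
    have hn₀ : n ∈ p₀.support := (hda_supp n).1 hnq
    -- dist b d = dist b m + dist m d
    have hdropm := hp₀path.dropUntil hmq
    have hWbd : (r.append (p₀.dropUntil m hmq)).IsPath := by
      refine T.isPath_append hrpath hdropm ?_
      intro y hy hyq
      exact hmprop y hy (Walk.support_dropUntil_subset _ hmq hyq)
    have ebd : T.dist b d = T.dist b m + T.dist m d := by
      rw [T.dist_eq hWbd, T.wlen_append, T.dist_eq hrpath, T.dist_eq hdropm]
    -- dist c a = dist c n + dist n a
    have hdropn := (T.cp_isPath d a).dropUntil hnq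
    have hWca : (r'.append ((T.cp d a).dropUntil n hnq)).IsPath := by
      refine T.isPath_append hr'path hdropn ?_
      intro y hy hyq
      exact hnprop y hy (Walk.support_dropUntil_subset _ hnq hyq)
    have eca : T.dist c a = T.dist c n + T.dist n a := by
      rw [T.dist_eq hWca, T.wlen_append, T.dist_eq hr'path, T.dist_eq hdropn]
    -- dist a d splits
    have ead_m : T.dist a d = T.dist a m + T.dist m d := T.dist_split hp₀path hmq
    have ead_n : T.dist a d = T.dist a n + T.dist n d := T.dist_split hp₀path hn₀
    -- where is n relative to m on p₀?
    have hn_cases : n ∈ (p₀.takeUntil m hmq).support ∨ n ∈ (p₀.dropUntil m hmq).support := by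
      rw [← Walk.mem_support_append_iff, p₀.take_spec hmq]; exact hn₀
    rcases hn_cases with hncase | hncase
    · -- n before m : a .. n .. m .. d ; build path c → n → m → b
      have htake := hp₀path.takeUntil hmq
      set seg := (p₀.takeUntil m hmq).dropUntil n hncase with hseg
      have hsegpath : seg.IsPath := htake.dropUntil hncase
      have hseg_sub : ∀ x, x ∈ seg.support → x ∈ p₀.support := by
        intro x hx
        exact Walk.support_takeUntil_subset _ hmq
          (Walk.support_dropUntil_subset _ hncase hx)
      -- dist a m = dist a n + dist n m
      have eam : T.dist a m = T.dist a n + T.dist n m := T.dist_split htake hncase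
      -- inner walk : seg.append r.reverse : Walk n b
      have hinner : (seg.append r.reverse).IsPath := by
        refine T.isPath_append hsegpath hrpath.reverse ?_
        intro y hy hyr
        rw [Walk.support_reverse, List.mem_reverse] at hyr
        exact hmprop y hyr (hseg_sub y hy)
      have hW : (r'.append (seg.append r.reverse)).IsPath := by
        refine T.isPath_append hr'path hinner ?_
        intro y hy hyi
        rw [Walk.mem_support_append_iff] at hyi
        rcases hyi with hyi | hyi
        · exact hnprop y hy ((hda_supp y).2 (hseg_sub y hyi))
        · rw [Walk.support_reverse, List.mem_reverse] at hyi
          exact absurd (hr'_sub y hy) (hA y (hr_sub y hyi))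
      have ecb : T.dist c b = T.dist c n + (T.dist n m + T.dist m b) := by
        rw [T.dist_eq hW, T.wlen_append, T.wlen_append, T.dist_eq hr'path,
          T.dist_eq hsegpath, T.dist_eq hrpath.reverse]
      have hnm_nonneg := T.dist_nonneg n m
      have c1 := T.dist_comm b c
      have c2 := T.dist_comm c b
      have c3 := T.dist_comm a c
      have c4 := T.dist_comm n a
      have c5 := T.dist_comm m b
      have c6 := T.dist_comm b m
      linarith [T.dist_comm a c, T.dist_comm c a]
    · -- m before n : a .. m .. n .. d ; build path b → m → n → c
      set seg := (p₀.dropUntil m hmq).takeUntil n hncase with hseg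
      have hsegpath : seg.IsPath := hdropm.takeUntil hncase
      have hseg_sub : ∀ x, x ∈ seg.support → x ∈ p₀.support := by
        intro x hx
        exact Walk.support_dropUntil_subset _ hmq
          (Walk.support_takeUntil_subset _ hncase hx)
      -- dist m d = dist m n + dist n d
      have emd : T.dist m d = T.dist m n + T.dist n d := T.dist_split hdropm hncase
      have hinner : (seg.append r'.reverse).IsPath := by
        refine T.isPath_append hsegpath hr'path.reverse ?_
        intro y hy hyr
        rw [Walk.support_reverse, List.mem_reverse] at hyr
        exact hnprop y hyr ((hda_supp y).2 (hseg_sub y hy))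
      have hW : (r.append (seg.append r'.reverse)).IsPath := by
        refine T.isPath_append hrpath hinner ?_
        intro y hy hyi
        rw [Walk.mem_support_append_iff] at hyi
        rcases hyi with hyi | hyi
        · exact hmprop y hy (hseg_sub y hyi)
        · rw [Walk.support_reverse, List.mem_reverse] at hyi
          exact absurd (hr'_sub y hyi) (hA y (hr_sub y hy))
      have ebc : T.dist b c = T.dist b m + (T.dist m n + T.dist n c) := by
        rw [T.dist_eq hW, T.wlen_append, T.wlen_append, T.dist_eq hrpath,
          T.dist_eq hsegpath, T.dist_eq hr'path.reverse]
      have c1 := T.dist_comm c a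
      have c2 := T.dist_comm n a
      have c3 := T.dist_comm n c
      linarith
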